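/- arXiv:1403.7181 — 6 statements merged into one kernel-verified Lean document; each statement's English description precedes it below -/
import Mathlib

section
/- Let A = (E, ≤, ↗, λ) be an asymmetric event structure, X ⊆ E a combinable set of events, A/X its folding and f : E → E/X the folding morphism. Then for every e ∈ E and every x ∈ E/X, if x </X f(e) then there exists e' ∈ E with e' < e and f(e') = x. -/
/-- Restriction of a binary relation to a set. -/
def RelRestrict {G : Type*} (r : G → G → Prop) (S : Set G) : G → G → Prop :=
  fun a b => a ∈ S ∧ b ∈ S ∧ r a b

/-- A binary relation is acyclic on a set: there is no cycle lying within the set. -/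
def AcyclicOn {G : Type*} (r : G → G → Prop) (S : Set G) : Prop :=
  ∀ x, ¬ Relation.TransGen (RelRestrict r S) x x

/-- The data of a labelled asymmetric event structure (AES). -/
structure AES (E : Type*) (Λ : Type*) where
  le : E → E → Prop
  ac : E → E → Prop
  lab : E → Λ

namespace AES

variable {E : Type*} {Λ : Type*}

/-- Strict causality. -/
def lt (A : AES E Λ) (e e' : E) : Prop := A.le e e' ∧ e ≠ e'

/-- The set of causes `⌊e⌋`. -/
def causes (A : AES E Λ) (e : E) : Set E := {e' | A.le e' e}

/-- `⌊Y⌋`, the causes of a set of events. -/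
def causesSet (A : AES E Λ) (Y : Set E) : Set E := ⋃ y ∈ Y, A.causes y

/-- The axioms making the data an asymmetric event structure. -/
structure IsAES (A : AES E Λ) : Prop where
  le_refl : ∀ e, A.le e e
  le_trans : ∀ e e' e'', A.le e e' → A.le e' e'' → A.le e e''
  le_antisymm : ∀ e e', A.le e e' → A.le e' e → e = e'
  causes_finite : ∀ e, (A.causes e).Finite
  lt_ac : ∀ e e', A.lt e e' → A.ac e e'
  ac_heredity : ∀ e e' e'', A.ac e e' → A.lt e' e'' → A.ac e e''
  ac_acyclic : ∀ e, AcyclicOn A.ac (A.causes e)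
  cyclic_ac : ∀ e e', ¬ AcyclicOn A.ac (A.causes e ∪ A.causes e') → A.ac e e'

/-- Conflict on sets of events, inductively generated from cycles of asymmetric
conflict and closed under hereditarity along causality. -/
inductive SetConflict (A : AES E Λ) : Set E → Prop
  | cycle (e : E) (l : List E) : List.Chain A.ac e (l ++ [e]) →
      SetConflict A {x | x ∈ e :: l}
  | heredity (Y : Set E) (e e' : E) :
      SetConflict A (Y ∪ {e}) → A.le e e' → SetConflict A (Y ∪ {e'})

/-- Binary conflict `e # e'`. -/
def Conflict (A : AES E Λ) (e e' : E) : Prop := A.SetConflict {e, e'}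

/-- A set of events is consistent if it contains no two events in conflict. -/
def ConsistentSet (A : AES E Λ) (Y : Set E) : Prop :=
  ∀ e ∈ Y, ∀ e' ∈ Y, ¬ A.Conflict e e'

/-- Immediate causality `e' <_μ e`. -/
def ltMu (A : AES E Λ) (e' e : E) : Prop :=
  A.lt e' e ∧ ¬ ∃ e'', A.lt e' e'' ∧ A.lt e'' e

/-- Direct asymmetric conflict `e ↗_μ e''`. -/
def acMu (A : AES E Λ) (e e'' : E) : Prop :=
  A.ac e e'' ∧ ¬ ∃ e', A.ac e e' ∧ A.lt e' e''

/-- Direct binary conflict `e #_μ e'`. -/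
def confMu (A : AES E Λ) (e e' : E) : Prop := A.acMu e e' ∧ A.acMu e' e

/-- Configurations: finite, causally closed and free of asymmetric-conflict cycles. -/
def Config (A : AES E Λ) (C : Set E) : Prop :=
  C.Finite ∧ (∀ e ∈ C, A.causes e ⊆ C) ∧ AcyclicOn A.ac C

/-- Similar sets of events. -/
def Similar (A : AES E Λ) (X : Set E) : Prop :=
  ∀ e ∈ X, ∀ e' ∈ X,
    A.lab e = A.lab e' ∧ (e ≠ e' → A.Conflict e e') ∧
    ∀ e'', e'' ∉ X →
      (A.ac e e'' → (A.ac e' e'' ∨ A.ac e'' e)) ∧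
      (A.acMu e'' e → A.ac e'' e')

/-- The strict causes `S(X)`. -/
def strictCauses (A : AES E Λ) (X : Set E) : Set E := {e' | ∀ e ∈ X, A.lt e' e}

/-- The weak predecessors `W(X)`. -/
def weakPred (A : AES E Λ) (X : Set E) : Set E :=
  {e'' | ∃ e ∈ X, ∃ e' ∈ X, A.ac e'' e ∧ ¬ A.ac e' e''} \ (A.strictCauses X ∪ X)

/-- The history `C⟦e⟧` of `e` in a configuration `C`. -/
def history (A : AES E Λ) (C : Set E) (e : E) : Set E :=
  {e' | e' ∈ C ∧ Relation.ReflTransGen (RelRestrict A.ac C) e' e}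

/-- The set of possible histories of `e`. -/
def Hist (A : AES E Λ) (e : E) : Set (Set E) :=
  {h | ∃ C, A.Config C ∧ e ∈ C ∧ h = A.history C e}

/-- Combinable sets of events. -/
def Combinable (A : AES E Λ) (X : Set E) : Prop :=
  A.Similar X ∧
  ∀ Y, Y ⊆ A.weakPred X → A.ConsistentSet Y →
    ∃ e ∈ X, (∀ e' ∈ Y, ¬ A.ac e e') ∧
      ∃ h ∈ A.Hist e, h \ {e} ⊆ A.strictCauses X ∪ A.causesSet Y

/-- The carrier of the folded structure: `(E \ X) ∪ {e_X}`, where the fresh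
event `e_X` is encoded as `none`. -/
def foldCarrier (X : Set E) : Set (Option E) :=
  {x | x = none ∨ ∃ e, e ∉ X ∧ x = some e}

/-- Causality of the folded structure. -/
def foldLe (A : AES E Λ) (X : Set E) : Option E → Option E → Prop
  | some e, some e' => e ∉ X ∧ e' ∉ X ∧ A.le e e'
  | some e, none => e ∈ A.strictCauses X
  | none, some e => e ∉ X ∧ ∃ e' ∈ X, A.lt e' e
  | none, none => True

/-- Asymmetric conflict of the folded structure. -/
def foldAc (A : AES E Λ) (X : Set E) : Option E → Option E → Prop
  | some e, some e' => e ∉ X ∧ e' ∉ X ∧ A.ac e e'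
  | some e', none => e' ∉ X ∧ ∀ e ∈ X, A.ac e' e
  | none, some e' => e' ∉ X ∧ ∀ e ∈ X, A.ac e e'
  | none, none => False

open Classical in
/-- Labelling of the folded structure. -/
noncomputable def foldLab [Inhabited Λ] (A : AES E Λ) (X : Set E) : Option E → Λ
  | some e => A.lab e
  | none => if h : X.Nonempty then A.lab h.some else default

open Classical in
/-- The folding morphism `f : E → E/X`. -/
noncomputable def foldMap (X : Set E) : E → Option E :=
  fun e => if e ∈ X then none else some e

end AES

open AES in
/-- causality in the folded AES is reflected by the folding
morphism: if `x </X f(e)` then there is `e' < e` with `f(e') = x`. -/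
theorem aes_folding_reflects_strict_causality
    {E Λ : Type*} (A : AES E Λ) (hA : A.IsAES) (X : Set E) (hX : A.Combinable X)
    (e : E) (x : Option E) (hx : x ∈ foldCarrier X)
    (hlt : A.foldLe X x (foldMap X e) ∧ x ≠ foldMap X e) :
    ∃ e' : E, A.lt e' e ∧ foldMap X e' = x := by
  classical
  obtain ⟨hle, hne⟩ := hlt
  by_cases heX : e ∈ X
  · cases x with
    | none => simp [foldMap, heX] at hne
    | some e'' =>
      simp only [foldMap, heX, if_pos] at hle
      have hcl : e'' ∈ A.strictCauses X := hle
      have h : A.lt e'' e := hcl e heX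
      have hnX : e'' ∉ X := fun hc => (hcl e'' hc).2 rfl
      exact ⟨e'', h, by simp [foldMap, hnX]⟩
  · cases x with
    | none =>
      simp only [foldMap, heX, if_neg, not_false_iff] at hle
      obtain ⟨_, e', he'X, hlt'⟩ := hle
      exact ⟨e', hlt', by simp [foldMap, he'X]⟩
    | some e'' =>
      simp only [foldMap, heX, if_neg, not_false_iff] at hle hne
      obtain ⟨h1, _, h3⟩ := hle
      exact ⟨e'', ⟨h3, fun h => hne (by rw [h])⟩, by simp [foldMap, h1]⟩
end

section
/- Let A = (E, ≤, ↗, λ) be an asymmetric event structure, X ⊆ E a combinable set of events, A/X its folding and f : E → E/X the folding morphism. Then for all e, e' ∈ E, if e ↗_μ e' (the asymmetric conflict is direct) then f(e) ↗/X f(e') or e # e'. -/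
open AES in
/-- direct asymmetric conflicts are either preserved by the
folding morphism or the two events are in conflict. -/
theorem aes_folding_preserves_direct_asymmetric_conflict
    {E Λ : Type*} (A : AES E Λ) (hA : A.IsAES) (X : Set E) (hX : A.Combinable X)
    (e e' : E) (h : A.acMu e e') :
    A.foldAc X (foldMap X e) (foldMap X e') ∨ A.Conflict e e' := by
  obtain ⟨hS, -⟩ := hX
  obtain ⟨hac, hmin⟩ := h
  by_cases he : e ∈ X <;> by_cases he' : e' ∈ X
  · by_cases heq : e = e'
    · subst heq
      right
      have hcyc : A.SetConflict {x | x ∈ e :: ([] : List E)} :=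
        AES.SetConflict.cycle e [] (by simpa [List.Chain] using hac)
      have hset : ({e, e} : Set E) = {x | x ∈ e :: ([] : List E)} := by
        ext x; simp
      unfold AES.Conflict
      rw [hset]
      exact hcyc
    · exact Or.inr ((hS e he e' he').2.1 heq)
  · by_cases hall : ∀ e0 ∈ X, A.ac e0 e'
    · left
      simp only [AES.foldMap, he, he', if_pos, if_neg, AES.foldAc]
      exact ⟨he', hall⟩
    · push_neg at hall
      obtain ⟨e0, he0, hne0⟩ := hall
      rcases ((hS e he e0 he0).2.2 e' he').1 hac with h1 | h1
      · exact absurd h1 hne0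
      · right
        have hcyc : A.SetConflict {x | x ∈ e :: [e']} :=
          AES.SetConflict.cycle e [e'] (by simp [List.Chain, hac, h1])
        have hset : ({e, e'} : Set E) = {x | x ∈ e :: [e']} := by
          ext x; simp
        unfold AES.Conflict
        rw [hset]
        exact hcyc
  · left
    have hall : ∀ e0 ∈ X, A.ac e e0 := fun e0 he0 =>
      ((hS e' he' e0 he0).2.2 e he).2 ⟨hac, hmin⟩
    simp only [AES.foldMap, he, he', if_pos, if_neg, AES.foldAc]
    exact ⟨he, hall⟩
  · left
    simp only [AES.foldMap, he, he', if_neg, AES.foldAc]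
    exact ⟨he, he', hac⟩
end

section
/- Let A = (E, ≤, ↗, λ) be an asymmetric event structure, X ⊆ E a combinable set of events, A/X its folding and f : E → E/X the folding morphism. Then causal chains are reflected by f: for every chain x1 ≤/X x2 ≤/X … ≤/X xk in E/X there exists a chain e1 ≤ e2 ≤ … ≤ ek in E with f(ei) = xi for every i ∈ {1, …, k}. -/
open AES in
lemma aes_fold_lift_step
    {E Λ : Type*} (A : AES E Λ) (hA : A.IsAES) (X : Set E)
    (x : Option E) (b : E) (hx : x ∈ foldCarrier X)
    (h : A.foldLe X x (foldMap X b)) :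
    ∃ e, A.le e b ∧ foldMap X e = x := by
  classical
  cases x with
  | none =>
    by_cases hb : b ∈ X
    · exact ⟨b, hA.le_refl b, by simp [foldMap, hb]⟩
    · rw [show foldMap X b = some b from by simp [foldMap, hb]] at h
      obtain ⟨-, e', he', hlt⟩ := h
      exact ⟨e', hlt.1, by simp [foldMap, he']⟩
  | some a =>
    obtain ha | ⟨a', ha', haa⟩ := hx
    · exact absurd ha (by simp)
    · obtain rfl : a = a' := by injection haa
      by_cases hb : b ∈ X
      · rw [show foldMap X b = none from by simp [foldMap, hb]] at h
        exact ⟨a, (h b hb).1, by simp [foldMap, ha']⟩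
      · rw [show foldMap X b = some b from by simp [foldMap, hb]] at h
        exact ⟨a, h.2.2, by simp [foldMap, ha']⟩

open AES in
/-- causal chains in the folded AES are reflected by the folding
morphism: every `≤/X`-chain `x₁ ≤/X … ≤/X x_k` in `E/X` is the image of a
`≤`-chain `e₁ ≤ … ≤ e_k` in `E`. -/
theorem aes_folding_reflects_causal_chains
    {E Λ : Type*} (A : AES E Λ) (hA : A.IsAES) (X : Set E) (hX : A.Combinable X)
    (k : ℕ) (xs : Fin (k + 1) → Option E)
    (hmem : ∀ i, xs i ∈ foldCarrier X)
    (hchain : ∀ i : Fin k, A.foldLe X (xs i.castSucc) (xs i.succ)) :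
    ∃ es : Fin (k + 1) → E,
      (∀ i : Fin k, A.le (es i.castSucc) (es i.succ)) ∧
      (∀ i, foldMap X (es i) = xs i) := by
  classical
  obtain ⟨eX, heX, -⟩ := hX.2 ∅ (Set.empty_subset _) (fun e he => absurd he (by simp))
  induction k with
  | zero =>
    obtain h0 | ⟨a, haX, ha⟩ := hmem 0
    · exact ⟨fun _ => eX, fun i => i.elim0,
        fun i => by rw [Fin.fin_one_eq_zero i, h0]; simp [foldMap, heX]⟩
    · exact ⟨fun _ => a, fun i => i.elim0,
        fun i => by rw [Fin.fin_one_eq_zero i, ha]; simp [foldMap, haX]⟩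
  | succ k ih =>
    obtain ⟨es', hch', hm'⟩ := ih (fun i => xs i.succ) (fun i => hmem i.succ)
      (fun i => by
        have := hchain i.succ
        rwa [show i.succ.castSucc = i.castSucc.succ from by
          ext; simp, show i.succ.succ = i.succ.succ from rfl] at this)
    have h0 : A.foldLe X (xs 0) (foldMap X (es' 0)) := by
      rw [hm' 0]
      have := hchain 0
      rwa [show ((0 : Fin (k+1)).castSucc : Fin (k+2)) = 0 from rfl,
        show ((0 : Fin (k+1)).succ : Fin (k+2)) = (0 : Fin (k+1)).succ from rfl] at this
    obtain ⟨e0, hle0, hmap0⟩ := aes_fold_lift_step A hA X (xs 0) (es' 0) (hmem 0) h0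
    refine ⟨Fin.cases e0 es', ?_, ?_⟩
    · intro i
      refine Fin.cases ?_ ?_ i
      · exact hle0
      · intro j
        have h1 : (j.succ.castSucc : Fin (k+2)) = j.castSucc.succ := by ext; simp
        rw [h1]
        simpa using hch' j
    · intro i
      refine Fin.cases ?_ ?_ i
      · simpa using hmap0
      · intro j; simpa using hm' j
end

section
/- Let A = (E, ≤, ↗, λ) be an asymmetric event structure and X ⊆ E a combinable set of events. Then the folding A/X = (E/X, ≤/X, ↗/X, λ/X) is itself an asymmetric event structure: ≤/X is a (well-founded) partial order with ⌊x⌋ = {x' ∈ E/X | x' ≤/X x} finite for every x ∈ E/X, and ↗/X satisfies the four AES axioms, in particular ↗/X restricted to ⌊x⌋ is acyclic for every x ∈ E/X. -/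
/-- The axioms of an asymmetric event structure, relative to a carrier set of
events. -/
structure IsAESOn {G : Type*} (carrier : Set G) (le ac : G → G → Prop) : Prop where
  le_refl : ∀ x ∈ carrier, le x x
  le_trans : ∀ x ∈ carrier, ∀ y ∈ carrier, ∀ z ∈ carrier, le x y → le y z → le x z
  le_antisymm : ∀ x ∈ carrier, ∀ y ∈ carrier, le x y → le y x → x = y
  wellFounded : carrier.WellFoundedOn (fun a b => le a b ∧ a ≠ b)
  causes_finite : ∀ x ∈ carrier, {y | y ∈ carrier ∧ le y x}.Finite
  lt_ac : ∀ x ∈ carrier, ∀ y ∈ carrier, le x y → x ≠ y → ac x y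
  ac_heredity : ∀ x ∈ carrier, ∀ y ∈ carrier, ∀ z ∈ carrier,
    ac x y → le y z → y ≠ z → ac x z
  ac_acyclic : ∀ x ∈ carrier, AcyclicOn ac {y | y ∈ carrier ∧ le y x}
  cyclic_ac : ∀ x ∈ carrier, ∀ y ∈ carrier,
    ¬ AcyclicOn ac ({z | z ∈ carrier ∧ le z x} ∪ {z | z ∈ carrier ∧ le z y}) → ac x y

/-- A transitive irreflexive relation with finite down-sets is well-founded on a set. -/
private lemma wfOn_of_finite_downsets {G : Type*} {S : Set G} {r : G → G → Prop}
    (htr : ∀ a ∈ S, ∀ b ∈ S, ∀ c ∈ S, r a b → r b c → r a c)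
    (hirr : ∀ a ∈ S, ¬ r a a)
    (hfin : ∀ a ∈ S, {y | y ∈ S ∧ r y a}.Finite) :
    S.WellFoundedOn r := by
  have key : ∀ a b : S, r a b →
      (hfin a a.2).toFinset.card < (hfin b b.2).toFinset.card := by
    intro a b hab
    apply Finset.card_lt_card
    rw [Finset.ssubset_def]
    constructor
    · intro y hy
      simp only [Set.Finite.mem_toFinset, Set.mem_setOf_eq] at hy ⊢
      exact ⟨hy.1, htr y hy.1 a a.2 b b.2 hy.2 hab⟩
    · intro hsub
      have ha : (a : G) ∈ (hfin b b.2).toFinset := by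
        simp only [Set.Finite.mem_toFinset, Set.mem_setOf_eq]
        exact ⟨a.2, hab⟩
      have := hsub ha
      simp only [Set.Finite.mem_toFinset, Set.mem_setOf_eq] at this
      exact hirr a a.2 this.2
  exact Subrelation.wf (fun {a b} h => key a b h)
    (InvImage.wf (fun a : S => (hfin a a.2).toFinset.card) (Nat.lt_wfRel.wf))

open AES in
/-- the folding of an AES on a combinable set of events is itself
an asymmetric event structure. -/
theorem aes_folding_isAES
    {E Λ : Type*} (A : AES E Λ) (hA : A.IsAES) (X : Set E) (hX : A.Combinable X) :
    IsAESOn (foldCarrier X) (A.foldLe X) (A.foldAc X) := by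
  obtain ⟨hsim, hcomb⟩ := hX
  have hne : X.Nonempty := by
    obtain ⟨e, he, -⟩ := hcomb ∅ (Set.empty_subset _)
      (fun a ha => (Set.notMem_empty a ha).elim)
    exact ⟨e, he⟩
  have acirr : ∀ e, ¬ A.ac e e := by
    intro e hac
    exact hA.ac_acyclic e e
      (Relation.TransGen.single ⟨hA.le_refl e, hA.le_refl e, hac⟩)
  have hSnotX : ∀ e ∈ A.strictCauses X, e ∉ X := by
    intro e he heX
    exact (he e heX).2 rfl
  have hcar : ∀ e : E, some e ∈ foldCarrier X ↔ e ∉ X := by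
    intro e
    constructor
    · rintro (h | ⟨e', he', heq⟩)
      · exact (Option.some_ne_none e h).elim
      · injection heq with h'
        subst h'
        exact he'
    · intro h
      exact Or.inr ⟨e, h, rfl⟩
  -- transitivity of the folded causality
  have htrans : ∀ a b c, A.foldLe X a b → A.foldLe X b c → A.foldLe X a c := by
    rintro (_ | a) (_ | b) (_ | c) h1 h2 <;>
      simp only [AES.foldLe] at h1 h2 ⊢
    · exact h2
    · obtain ⟨x, hxX, hlt⟩ := h1.2
      refine ⟨h2.2.1, x, hxX, hA.le_trans _ _ _ hlt.1 h2.2.2, ?_⟩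
      rintro rfl
      exact hlt.2 (hA.le_antisymm _ _ hlt.1 h2.2.2)
    · exact h1
    · obtain ⟨x, hxX, hlt⟩ := h2.2
      exact ⟨hSnotX _ h1, h2.1, hA.le_trans a x c (h1 x hxX).1 hlt.1⟩
    · intro x hx
      refine ⟨hA.le_trans a b x h1.2.2 (h2 x hx).1, ?_⟩
      rintro rfl
      exact h1.1 hx
    · exact ⟨h1.1, h2.2.1, hA.le_trans _ _ _ h1.2.2 h2.2.2⟩
  -- antisymmetry of the folded causality
  have hanti : ∀ a b, A.foldLe X a b → A.foldLe X b a → a = b := by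
    rintro (_ | a) (_ | b) h1 h2 <;>
      simp only [AES.foldLe] at h1 h2
    · rfl
    · obtain ⟨x, hxX, hlt⟩ := h1.2
      exact absurd (hA.le_antisymm x b hlt.1 (h2 x hxX).1) hlt.2
    · obtain ⟨x, hxX, hlt⟩ := h2.2
      exact absurd (hA.le_antisymm x a hlt.1 (h1 x hxX).1) hlt.2
    · exact congrArg some (hA.le_antisymm a b h1.2.2 h2.2.2)
  -- finiteness of folded causes
  have hfin : ∀ x ∈ foldCarrier X, {y | y ∈ foldCarrier X ∧ A.foldLe X y x}.Finite := by
    rintro (_ | e) _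
    · obtain ⟨x₀, hx₀⟩ := hne
      apply Set.Finite.subset (((hA.causes_finite x₀).image some).insert none)
      rintro (_ | a) ⟨hacar, hale⟩
      · exact Set.mem_insert _ _
      · simp only [AES.foldLe] at hale
        exact Set.mem_insert_of_mem _ ⟨a, (hale x₀ hx₀).1, rfl⟩
    · apply Set.Finite.subset (((hA.causes_finite e).image some).insert none)
      rintro (_ | a) ⟨hacar, hale⟩
      · exact Set.mem_insert _ _
      · simp only [AES.foldLe] at hale
        exact Set.mem_insert_of_mem _ ⟨a, hale.2.2, rfl⟩
  -- the cycle-lifting device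
  have step : ∀ (D : Set (Option E)) (D' : Set E) (x₀ : E), x₀ ∈ X →
      (none ∈ D → x₀ ∈ D') → (∀ a : E, some a ∈ D → a ∈ D') →
      ¬ AcyclicOn (A.foldAc X) D → ¬ AcyclicOn A.ac D' := by
    intro D D' x₀ hx₀ hnone hsome hcyc hacy
    apply hcyc
    intro z hz
    refine hacy (z.getD x₀) (Relation.TransGen.lift (fun o : Option E => o.getD x₀) ?_ _ _ hz)
    rintro (_ | a) (_ | b) ⟨haD, hbD, hab⟩
    · simp only [AES.foldAc] at hab
    · simp only [AES.foldAc] at hab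
      exact ⟨hnone haD, hsome b hbD, hab.2 x₀ hx₀⟩
    · simp only [AES.foldAc] at hab
      exact ⟨hsome a haD, hnone hbD, hab.2 x₀ hx₀⟩
    · simp only [AES.foldAc] at hab
      exact ⟨hsome a haD, hsome b hbD, hab.2.2⟩
  constructor
  -- le_refl
  · rintro (_ | e) hx
    · trivial
    · exact ⟨(hcar e).1 hx, (hcar e).1 hx, hA.le_refl e⟩
  -- le_trans
  · intro x _ y _ z _ h1 h2
    exact htrans x y z h1 h2
  -- le_antisymm
  · intro x _ y _ h1 h2
    exact hanti x y h1 h2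
  -- wellFounded
  · apply wfOn_of_finite_downsets
    · intro a _ b _ c _ h1 h2
      refine ⟨htrans a b c h1.1 h2.1, ?_⟩
      rintro rfl
      exact h1.2 (hanti a b h1.1 h2.1)
    · intro a _ h
      exact h.2 rfl
    · intro a ha
      exact (hfin a ha).subset (fun y hy => ⟨hy.1, hy.2.1⟩)
  -- causes_finite
  · exact hfin
  -- lt_ac
  · rintro (_ | e) hx (_ | e') hy h1 hne'
    · exact absurd rfl hne'
    · simp only [AES.foldLe] at h1
      simp only [AES.foldAc]
      obtain ⟨heX, x₀, hx₀X, hlt⟩ := h1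
      refine ⟨heX, fun x' hx' => ?_⟩
      have hax₀ : A.ac x₀ e' := hA.lt_ac _ _ hlt
      rcases ((hsim x₀ hx₀X x' hx').2.2 e' heX).1 hax₀ with h | h
      · exact h
      · exact absurd (hA.ac_heredity e' x₀ e' h hlt) (acirr e')
    · simp only [AES.foldLe] at h1
      simp only [AES.foldAc]
      exact ⟨hSnotX e h1, fun x hx => hA.lt_ac e x (h1 x hx)⟩
    · simp only [AES.foldLe] at h1
      simp only [AES.foldAc]
      exact ⟨h1.1, h1.2.1, hA.lt_ac e e' ⟨h1.2.2, fun h => hne' (congrArg some h)⟩⟩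
  -- ac_heredity
  · rintro (_ | a) hx (_ | b) hy (_ | c) hz h1 h2 hne2 <;>
      simp only [AES.foldAc, AES.foldLe] at h1 h2 ⊢
    · obtain ⟨x₀, hx₀⟩ := hne
      exact acirr x₀ (hA.ac_heredity x₀ b x₀ (h1.2 x₀ hx₀) (h2 x₀ hx₀))
    · exact ⟨h2.2.1, fun x hx => hA.ac_heredity x b c (h1.2 x hx)
        ⟨h2.2.2, fun h => hne2 (congrArg some h)⟩⟩
    · exact absurd rfl hne2
    · obtain ⟨x, hx', hlt⟩ := h2.2
      exact ⟨h1.1, h2.1, hA.ac_heredity a x c (h1.2 x hx') hlt⟩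
    · exact ⟨h1.1, fun x hx' => hA.ac_heredity a b x h1.2.2 (h2 x hx')⟩
    · exact ⟨h1.1, h2.2.1, hA.ac_heredity a b c h1.2.2
        ⟨h2.2.2, fun h => hne2 (congrArg some h)⟩⟩
  -- ac_acyclic
  · rintro (_ | e) hx
    · obtain ⟨x₀, hx₀⟩ := hne
      by_contra hcyc
      refine step _ (A.causes x₀) x₀ hx₀ (fun _ => hA.le_refl x₀) ?_ hcyc
        (hA.ac_acyclic x₀)
      intro a ha
      have hale := ha.2
      simp only [AES.foldLe] at hale
      exact (hale x₀ hx₀).1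
    · by_cases h : ∃ x' ∈ X, A.lt x' e
      · obtain ⟨x₀, hx₀, hlt⟩ := h
        by_contra hcyc
        refine step _ (A.causes e) x₀ hx₀ (fun _ => hlt.1) ?_ hcyc (hA.ac_acyclic e)
        intro a ha
        have hale := ha.2
        simp only [AES.foldLe] at hale
        exact hale.2.2
      · obtain ⟨x₀, hx₀⟩ := hne
        by_contra hcyc
        refine step _ (A.causes e) x₀ hx₀ ?_ ?_ hcyc (hA.ac_acyclic e)
        · intro hn
          have := hn.2
          simp only [AES.foldLe] at this
          exact absurd this.2 h
        · intro a ha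
          have hale := ha.2
          simp only [AES.foldLe] at hale
          exact hale.2.2
  -- cyclic_ac
  · rintro (_ | e) hx (_ | e') hy hcyc
    · -- none, none : derive False
      simp only [AES.foldAc]
      obtain ⟨x₀, hx₀⟩ := hne
      refine step _ (A.causes x₀) x₀ hx₀ (fun _ => hA.le_refl x₀) ?_ hcyc
        (hA.ac_acyclic x₀)
      intro a ha
      rcases ha with ⟨_, hale⟩ | ⟨_, hale⟩ <;>
        simp only [AES.foldLe] at hale <;>
        exact (hale x₀ hx₀).1
    · -- none, some e'
      simp only [AES.foldAc]
      refine ⟨(hcar e').1 hy, fun x' hx' => ?_⟩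
      apply hA.cyclic_ac x' e'
      refine step _ (A.causes x' ∪ A.causes e') x' hx'
        (fun _ => Or.inl (hA.le_refl x')) ?_ hcyc
      intro a ha
      rcases ha with ⟨_, hale⟩ | ⟨_, hale⟩ <;>
        simp only [AES.foldLe] at hale
      · exact Or.inl (hale x' hx').1
      · exact Or.inr hale.2.2
    · -- some e, none
      simp only [AES.foldAc]
      refine ⟨(hcar e).1 hx, fun x' hx' => ?_⟩
      apply hA.cyclic_ac e x'
      refine step _ (A.causes e ∪ A.causes x') x' hx'
        (fun _ => Or.inr (hA.le_refl x')) ?_ hcyc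
      intro a ha
      rcases ha with ⟨_, hale⟩ | ⟨_, hale⟩ <;>
        simp only [AES.foldLe] at hale
      · exact Or.inl hale.2.2
      · exact Or.inr (hale x' hx').1
    · -- some e, some e'
      simp only [AES.foldAc]
      refine ⟨(hcar e).1 hx, (hcar e').1 hy, ?_⟩
      apply hA.cyclic_ac e e'
      have hsome : ∀ a : E, some a ∈ ({z | z ∈ foldCarrier X ∧ A.foldLe X z (some e)}
          ∪ {z | z ∈ foldCarrier X ∧ A.foldLe X z (some e')}) →
          a ∈ A.causes e ∪ A.causes e' := by
        intro a ha
        rcases ha with ⟨_, hale⟩ | ⟨_, hale⟩ <;>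
          simp only [AES.foldLe] at hale
        · exact Or.inl hale.2.2
        · exact Or.inr hale.2.2
      by_cases h1 : ∃ x' ∈ X, A.lt x' e
      · obtain ⟨x₀, hx₀, hlt⟩ := h1
        exact step _ (A.causes e ∪ A.causes e') x₀ hx₀
          (fun _ => Or.inl hlt.1) hsome hcyc
      · by_cases h2 : ∃ x' ∈ X, A.lt x' e'
        · obtain ⟨x₀, hx₀, hlt⟩ := h2
          exact step _ (A.causes e ∪ A.causes e') x₀ hx₀
            (fun _ => Or.inr hlt.1) hsome hcyc
        · obtain ⟨x₀, hx₀⟩ := hne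
          refine step _ (A.causes e ∪ A.causes e') x₀ hx₀ ?_ hsome hcyc
          intro hn
          rcases hn with ⟨_, hale⟩ | ⟨_, hale⟩ <;>
            simp only [AES.foldLe] at hale
          · exact absurd hale.2 h1
          · exact absurd hale.2 h2
end

section
/- Let A = (E, ≤, ↗, λ) be an asymmetric event structure, X ⊆ E a combinable set of events and A/X its folding. Then the folding morphism f : E → E/X is an AES-morphism from A to A/X. -/
open AES in
/-- the folding morphism is an AES-morphism from `A` to `A/X`:
(1) `⌊f(e)⌋ ⊆ f(⌊e⌋)`, (2) it reflects asymmetric conflict, and (3) events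
identified by it are in conflict. -/
theorem aes_foldMap_is_AES_morphism
    {E Λ : Type*} (A : AES E Λ) (hA : A.IsAES) (X : Set E) (hX : A.Combinable X) :
    (∀ e : E, {x | x ∈ foldCarrier X ∧ A.foldLe X x (foldMap X e)} ⊆
        foldMap X '' (A.causes e)) ∧
    (∀ e e' : E, A.foldAc X (foldMap X e) (foldMap X e') → A.ac e e') ∧
    (∀ e e' : E, foldMap X e = foldMap X e' → e ≠ e' → A.Conflict e e') := by
  refine ⟨?_, ?_, ?_⟩
  · intro e x hx
    obtain ⟨hcar, hle⟩ := hx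
    by_cases he : e ∈ X
    · -- foldMap e = none
      simp only [foldMap, he, if_true] at hle
      rcases hcar with rfl | ⟨a, haX, rfl⟩
      · exact ⟨e, hA.le_refl e, by simp [foldMap, he]⟩
      · -- hle : foldLe (some a) none = a ∈ strictCauses X
        have ha : A.lt a e := hle e he
        exact ⟨a, ha.1, by simp [foldMap, haX]⟩
    · simp only [foldMap, he, if_false] at hle
      rcases hcar with rfl | ⟨a, haX, rfl⟩
      · obtain ⟨-, e', he'X, hlt⟩ := hle
        exact ⟨e', hlt.1, by simp [foldMap, he'X]⟩
      · exact ⟨a, hle.2.2, by simp [foldMap, haX]⟩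
  · intro e e' h
    by_cases he : e ∈ X <;> by_cases he' : e' ∈ X <;>
      simp only [foldMap, foldAc, he, he', if_true, if_false] at h <;>
      first
        | exact h.elim
        | exact h.2 e he
        | exact h.2.2 e' he'
        | exact h.2.2
        | exact h e he
        | exact h e' he'
        | exact h.2 e' he'
  · intro e e' h hne
    by_cases he : e ∈ X <;> by_cases he' : e' ∈ X <;>
      simp only [foldMap, he, he', if_true, if_false] at h
    · exact ((hX.1 e he e' he').2.1 hne)
    · exact absurd h (Option.some_ne_none e').symm
    · exact absurd h (Option.some_ne_none e)
    · exact absurd (Option.some_injective E h) hne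
end

section
/- Let A = (E, ≤, ↗, λ) be an asymmetric event structure, X ⊆ E a combinable set of events, A/X its folding and f : E → E/X the folding morphism. Then R = {(C1, f|_{C1}, f(C1)) | C1 ∈ Conf(A)} is a history preserving bisimulation between A and A/X. -/
/-- An event structure with asymmetric conflict, presented with an explicit
carrier set of events (used for the folded structure, whose events form a
subset of `Option E`). -/
structure ES (G : Type*) (Λ : Type*) where
  carrier : Set G
  le : G → G → Prop
  ac : G → G → Prop
  lab : G → Λ

namespace ES

variable {G : Type*} {Λ : Type*}

/-- Configurations: finite, causally closed subsets of the carrier on which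
asymmetric conflict is acyclic. -/
def Config (D : ES G Λ) (C : Set G) : Prop :=
  C ⊆ D.carrier ∧ C.Finite ∧ (∀ x ∈ C, ∀ y ∈ D.carrier, D.le y x → y ∈ C) ∧
  AcyclicOn D.ac C

/-- The extension order on configurations: `C₁ ⊑ C₂` iff `C₁ ⊆ C₂` and no event
of `C₂ \ C₁` is in asymmetric conflict with an event of `C₁`. -/
def Extends (D : ES G Λ) (C₁ C₂ : Set G) : Prop :=
  C₁ ⊆ C₂ ∧ ∀ e ∈ C₁, ∀ e' ∈ C₂, e' ∉ C₁ → ¬ D.ac e' e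

end ES

/-- `g` is a label-preserving isomorphism between the configuration `C₁` of
`D₁`, ordered by `(↗₁|_{C₁})*`, and the configuration `C₂` of `D₂`, ordered by
`(↗₂|_{C₂})*`. -/
def IsPosetIso {G₁ G₂ Λ : Type*} (D₁ : ES G₁ Λ) (D₂ : ES G₂ Λ)
    (C₁ : Set G₁) (C₂ : Set G₂) (g : G₁ → G₂) : Prop :=
  Set.InjOn g C₁ ∧ g '' C₁ = C₂ ∧ (∀ e ∈ C₁, D₂.lab (g e) = D₁.lab e) ∧
  ∀ e ∈ C₁, ∀ e' ∈ C₁,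
    (Relation.ReflTransGen (RelRestrict D₁.ac C₁) e e' ↔
      Relation.ReflTransGen (RelRestrict D₂.ac C₂) (g e) (g e'))

/-- History preserving bisimulations between (asymmetric) event structures:
sets of triples `(C₁, g, C₂)` of configurations related by a label-preserving
order isomorphism `g`, containing the empty triple, such that every one-event
extension on either side can be matched on the other side by an equally
labelled event, extending the isomorphism. -/
def IsHpBisim {G₁ G₂ Λ : Type*} (D₁ : ES G₁ Λ) (D₂ : ES G₂ Λ)
    (R : Set (Set G₁ × (G₁ → G₂) × Set G₂)) : Prop :=
  (∀ t ∈ R, D₁.Config t.1 ∧ D₂.Config t.2.2 ∧ IsPosetIso D₁ D₂ t.1 t.2.2 t.2.1) ∧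
  (∃ g, ((∅ : Set G₁), g, (∅ : Set G₂)) ∈ R) ∧
  ∀ C₁ g C₂, (C₁, g, C₂) ∈ R →
    (∀ e₁ ∈ D₁.carrier, D₁.Extends C₁ (C₁ ∪ {e₁}) → D₁.Config (C₁ ∪ {e₁}) →
      ∃ e₂ ∈ D₂.carrier, D₂.lab e₂ = D₁.lab e₁ ∧
        ∃ g', (∀ x ∈ C₁, g' x = g x) ∧ (C₁ ∪ {e₁}, g', C₂ ∪ {e₂}) ∈ R) ∧
    (∀ e₂ ∈ D₂.carrier, D₂.Extends C₂ (C₂ ∪ {e₂}) → D₂.Config (C₂ ∪ {e₂}) →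
      ∃ e₁ ∈ D₁.carrier, D₁.lab e₁ = D₂.lab e₂ ∧
        ∃ g', (∀ x ∈ C₁, g' x = g x) ∧ (C₁ ∪ {e₁}, g', C₂ ∪ {e₂}) ∈ R)

namespace AES

variable {E : Type*} {Λ : Type*}

/-- An AES viewed as a carrier-based event structure (carrier: all events). -/
def toES (A : AES E Λ) : ES E Λ := ⟨Set.univ, A.le, A.ac, A.lab⟩

/-- The folded structure `A/X` as a carrier-based event structure. -/
noncomputable def foldES [Inhabited Λ] (A : AES E Λ) (X : Set E) : ES (Option E) Λ :=
  ⟨foldCarrier X, A.foldLe X, A.foldAc X, A.foldLab X⟩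

end AES

section Aux

open Relation

variable {E : Type*} {Λ : Type*}

namespace AES

lemma IsAES.not_ac_self {A : AES E Λ} (hA : A.IsAES) (e : E) : ¬ A.ac e e := fun h =>
  hA.ac_acyclic e e (Relation.TransGen.single ⟨hA.le_refl e, hA.le_refl e, h⟩)

lemma IsAES.causes_ssubset {A : AES E Λ} (hA : A.IsAES) {u w : E} (h : A.lt u w) :
    A.causes u ⊂ A.causes w := by
  rw [Set.ssubset_def]
  constructor
  · intro z hz
    exact hA.le_trans _ _ _ hz h.1
  · intro hsub
    exact h.2 (hA.le_antisymm _ _ h.1 (hsub (hA.le_refl w)))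

lemma IsAES.acMu_exists {A : AES E Λ} (hA : A.IsAES) {z w : E} (h : A.ac z w) :
    ∃ w', A.le w' w ∧ A.acMu z w' := by
  have main : ∀ n, ∀ z w : E, (A.causes w).ncard ≤ n → A.ac z w →
      ∃ w', A.le w' w ∧ A.acMu z w' := by
    intro n
    induction n using Nat.strong_induction_on with
    | _ n ih =>
      intro z w hcard h
      by_cases hm : ∃ e', A.ac z e' ∧ A.lt e' w
      · obtain ⟨e', hze', hlt⟩ := hm
        have hlt' : (A.causes e').ncard < (A.causes w).ncard :=
          Set.ncard_lt_ncard (hA.causes_ssubset hlt) (hA.causes_finite w)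
        obtain ⟨w', hw', hmu⟩ := ih (A.causes e').ncard (by omega) z e' le_rfl hze'
        exact ⟨w', hA.le_trans _ _ _ hw' hlt.1, hmu⟩
      · exact ⟨w, hA.le_refl w, h, hm⟩
  exact main (A.causes w).ncard z w le_rfl h

private lemma chain_transGen {A : AES E Λ} {D : Set E} :
    ∀ (l : List E) (a b : E), a ∈ D → b ∈ D → (∀ x ∈ l, x ∈ D) →
      List.Chain A.ac a (l ++ [b]) → Relation.TransGen (RelRestrict A.ac D) a b := by
  intro l
  induction l with
  | nil =>
    intro a b ha hb _ hch
    simp only [List.nil_append, List.chain_cons] at hch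
    exact TransGen.single ⟨ha, hb, List.rel_of_isChain_cons_cons hch⟩
  | cons c l ih =>
    intro a b ha hb hl hch
    rw [List.cons_append] at hch; replace hch := List.isChain_cons_cons.mp hch
    exact TransGen.head ⟨ha, hl c (List.mem_cons_self (a := c) (l := l)), hch.1⟩
      (ih c b (hl c (List.mem_cons_self (a := c) (l := l))) hb
        (fun x hx => hl x (List.mem_cons_of_mem _ hx)) hch.2)

lemma setConflict_cycle {A : AES E Λ} {Y : Set E} (hY : A.SetConflict Y) :
    ∀ D : Set E, (∀ u ∈ D, ∀ z, A.le z u → z ∈ D) → Y ⊆ D → ¬ AcyclicOn A.ac D := by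
  induction hY with
  | cycle e l hchain =>
    intro D _ hsub hacy
    have he : e ∈ D := hsub (by simp)
    have hl : ∀ x ∈ l, x ∈ D := fun x hx => hsub (by simp [hx])
    exact hacy e (chain_transGen l e e he he hl hchain)
  | heredity Y e e' hconf hle ih =>
    intro D hcl hsub
    apply ih D hcl
    intro x hx
    rcases hx with hx | hx
    · exact hsub (Or.inl hx)
    · have he' : e' ∈ D := hsub (Or.inr rfl)
      have hx' : x = e := hx
      subst hx'
      exact hcl e' he' x hle

end AES

end Aux
section Aux2

open Relation

variable {E : Type*} {Λ : Type*}

namespace AES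

lemma mutual_ac {A : AES E Λ} (hA : A.IsAES) {X : Set E} (hS : A.Similar X)
    {e e' : E} (he : e ∈ X) (he' : e' ∈ X) (hne : e ≠ e') : A.ac e e' := by
  have hconf : A.Conflict e e' := (hS e he e' he').2.1 hne
  apply hA.cyclic_ac e e'
  apply setConflict_cycle hconf (A.causes e ∪ A.causes e')
  · intro u hu z hz
    rcases hu with hu | hu
    · exact Or.inl (hA.le_trans _ _ _ hz hu)
    · exact Or.inr (hA.le_trans _ _ _ hz hu)
  · intro x hx
    rcases hx with hx | hx
    · have : x = e := hx
      exact Or.inl (this ▸ hA.le_refl e)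
    · have : x = e' := hx
      exact Or.inr (this ▸ hA.le_refl e')

lemma config_unique_X {A : AES E Λ} (hA : A.IsAES) {X : Set E} (hS : A.Similar X)
    {C : Set E} (hC : A.Config C) {e e' : E}
    (he : e ∈ C) (heX : e ∈ X) (he' : e' ∈ C) (heX' : e' ∈ X) : e = e' := by
  by_contra hne
  have hconf : A.Conflict e e' := (hS e heX e' heX').2.1 hne
  refine setConflict_cycle hconf C (fun u hu z hz => hC.2.1 u hu hz) ?_ hC.2.2
  intro x hx
  rcases hx with hx | hx
  · exact (show x = e from hx) ▸ he
  · exact (show x = e' from hx) ▸ he'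

lemma foldMap_mem {X : Set E} {e : E} (h : e ∈ X) : foldMap X e = none := by
  simp [foldMap, h]

lemma foldMap_not_mem {X : Set E} {e : E} (h : e ∉ X) : foldMap X e = some e := by
  simp [foldMap, h]

lemma mem_image_some {X C : Set E} {u : E} :
    some u ∈ foldMap X '' C ↔ u ∈ C ∧ u ∉ X := by
  constructor
  · rintro ⟨v, hv, hfv⟩
    by_cases h : v ∈ X
    · rw [foldMap_mem h] at hfv; exact absurd hfv (by simp)
    · rw [foldMap_not_mem h] at hfv
      obtain rfl : v = u := by injection hfv
      exact ⟨hv, h⟩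
  · rintro ⟨hu, huX⟩
    exact ⟨u, hu, foldMap_not_mem huX⟩

lemma mem_image_none {X C : Set E} :
    (none : Option E) ∈ foldMap X '' C ↔ ∃ c ∈ C, c ∈ X := by
  constructor
  · rintro ⟨v, hv, hfv⟩
    by_cases h : v ∈ X
    · exact ⟨v, hv, h⟩
    · rw [foldMap_not_mem h] at hfv; exact absurd hfv (by simp)
  · rintro ⟨c, hc, hcX⟩
    exact ⟨c, hc, foldMap_mem hcX⟩

lemma foldLab_none {A : AES E Λ} [Inhabited Λ] {X : Set E} (hS : A.Similar X)
    {c : E} (hc : c ∈ X) : A.foldLab X none = A.lab c := by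
  have hne : X.Nonempty := ⟨c, hc⟩
  have h1 : A.foldLab X none = A.lab hne.some := by
    simp [AES.foldLab, hne]
  rw [h1]
  exact (hS hne.some hne.some_mem c hc).1

lemma foldLab_foldMap {A : AES E Λ} [Inhabited Λ] {X : Set E} (hS : A.Similar X)
    (e : E) : A.foldLab X (foldMap X e) = A.lab e := by
  by_cases h : e ∈ X
  · rw [foldMap_mem h]; exact foldLab_none hS h
  · rw [foldMap_not_mem h]; rfl

lemma transGen_exists_head {α : Type*} {r : α → α → Prop} {a b : α}
    (h : Relation.TransGen r a b) : ∃ c, r a c := by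
  induction h with
  | single h => exact ⟨_, h⟩
  | tail _ _ ih => exact ih

end AES

end Aux2
section Aux3

open Relation

variable {E : Type*} {Λ : Type*}

namespace AES

/-- Descent lemma: if `z ∉ X` is in asymmetric conflict with `w ∈ X`, then in the
folded structure there is a path of asymmetric conflict from `some z` to `none`,
within any set `K` containing the images of a causally closed set `D`. -/
lemma desc {A : AES E Λ} (hA : A.IsAES) {X : Set E} (hS : A.Similar X)
    {D : Set E} {K : Set (Option E)}
    (hDcl : ∀ u ∈ D, ∀ z, A.le z u → z ∈ D)
    (hFn : ∀ v ∈ D, v ∉ X → some v ∈ K) (hK0 : (none : Option E) ∈ K) :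
    ∀ w ∈ X, w ∈ D → ∀ z ∈ D, z ∉ X → A.ac z w →
      Relation.TransGen (RelRestrict (A.foldAc X) K) (some z) none := by
  have main : ∀ n, ∀ w, w ∈ X → w ∈ D → (A.causes w).ncard ≤ n →
      ∀ z, z ∈ D → z ∉ X → A.ac z w →
      Relation.TransGen (RelRestrict (A.foldAc X) K) (some z) none := by
    intro n
    induction n using Nat.strong_induction_on with
    | _ n ihn =>
      intro w hwX hwD hwcard
      -- the set of events reachable from z inside ⌊w⌋
      set reach : E → Set E :=
        fun z => {v | v ∈ A.causes w ∧ TransGen (RelRestrict A.ac (A.causes w)) z v} with hreach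
      have hreachfin : ∀ z, (reach z).Finite :=
        fun z => (hA.causes_finite w).subset (fun v hv => hv.1)
      -- single step when the conflict is direct
      have hstep : ∀ z, z ∈ D → z ∉ X → A.acMu z w →
          RelRestrict (A.foldAc X) K (some z) none := by
        intro z hzD hzX hmu
        refine ⟨hFn z hzD hzX, hK0, ?_⟩
        show z ∉ X ∧ ∀ e ∈ X, A.ac z e
        exact ⟨hzX, fun e he => ((hS w hwX e he).2.2 z hzX).2 hmu⟩
      -- case analysis on directness
      have hcases : ∀ z, z ∈ D → z ∉ X → A.ac z w → ¬ A.acMu z w →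
          ∃ u, A.ac z u ∧ A.lt u w ∧ u ∈ D ∧ u ∈ A.causes w := by
        intro z hzD hzX hac hmu
        rw [AES.acMu, not_and_or] at hmu
        rcases hmu with h | h
        · exact absurd hac h
        · obtain ⟨u, hzu, hult⟩ := not_not.mp h
          exact ⟨u, hzu, hult, hDcl w hwD u hult.1, hult.1⟩
      -- outer recursion for u ∈ X, u < w
      have houter : ∀ z u, z ∈ D → z ∉ X → u ∈ X → A.lt u w → A.ac z u →
          Relation.TransGen (RelRestrict (A.foldAc X) K) (some z) none := by
        intro z u hzD hzX huX hult hzu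
        have hlt : (A.causes u).ncard < n :=
          lt_of_lt_of_le (Set.ncard_lt_ncard (hA.causes_ssubset hult) (hA.causes_finite w))
            hwcard
        exact ihn (A.causes u).ncard hlt u huX (hDcl w hwD u hult.1) le_rfl z hzD hzX hzu
      -- inner recursion inside ⌊w⌋
      have inner : ∀ m z, z ∈ D → z ∉ X → z ∈ A.causes w → A.ac z w →
          (reach z).ncard ≤ m →
          Relation.TransGen (RelRestrict (A.foldAc X) K) (some z) none := by
        intro m
        induction m using Nat.strong_induction_on with
        | _ m ihm =>
          intro z hzD hzX hzw hac hcard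
          by_cases hmu : A.acMu z w
          · exact TransGen.single (hstep z hzD hzX hmu)
          · obtain ⟨u, hzu, hult, huD, hucw⟩ := hcases z hzD hzX hac hmu
            by_cases huX : u ∈ X
            · exact houter z u hzD hzX huX hult hzu
            · have hedge : RelRestrict (A.foldAc X) K (some z) (some u) :=
                ⟨hFn z hzD hzX, hFn u huD huX, hzX, huX, hzu⟩
              have hzu' : TransGen (RelRestrict A.ac (A.causes w)) z u :=
                TransGen.single ⟨hzw, hucw, hzu⟩
              have hsubs : reach u ⊆ reach z := fun v hv => ⟨hv.1, hzu'.trans hv.2⟩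
              have humem : u ∈ reach z := ⟨hucw, hzu'⟩
              have hunmem : u ∉ reach u := fun hu => hA.ac_acyclic w u hu.2
              have hlt : (reach u).ncard < m :=
                lt_of_lt_of_le
                  (Set.ncard_lt_ncard ⟨hsubs, fun hsu => hunmem (hsu humem)⟩ (hreachfin z))
                  hcard
              exact TransGen.head hedge
                (ihm (reach u).ncard hlt u huD huX hucw (hA.lt_ac _ _ hult) le_rfl)
      -- main body
      intro z hzD hzX hac
      by_cases hmu : A.acMu z w
      · exact TransGen.single (hstep z hzD hzX hmu)
      · obtain ⟨u, hzu, hult, huD, hucw⟩ := hcases z hzD hzX hac hmu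
        by_cases huX : u ∈ X
        · exact houter z u hzD hzX huX hult hzu
        · have hedge : RelRestrict (A.foldAc X) K (some z) (some u) :=
            ⟨hFn z hzD hzX, hFn u huD huX, hzX, huX, hzu⟩
          exact TransGen.head hedge
            (inner (reach u).ncard u huD huX hucw (hA.lt_ac _ _ hult) le_rfl)
  intro w hwX hwD z hzD hzX hac
  exact main (A.causes w).ncard w hwX hwD le_rfl z hzD hzX hac

end AES

end Aux3
section Aux4

open Relation

variable {E : Type*} {Λ : Type*}

namespace AES

/-- Lifting an edge of the folded structure (restricted to the image of a
configuration) back to an edge in the original structure. -/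
lemma edge_back {A : AES E Λ} {X C : Set E} {c : E}
    (hc : (none : Option E) ∈ foldMap X '' C → c ∈ C ∧ c ∈ X) :
    ∀ x y, RelRestrict (A.foldAc X) (foldMap X '' C) x y →
      RelRestrict A.ac C (x.getD c) (y.getD c) := by
  rintro x y ⟨hx, hy, hxy⟩
  match x, y with
  | some u, some v =>
    have hu := (mem_image_some.mp hx).1
    have hv := (mem_image_some.mp hy).1
    exact ⟨hu, hv, hxy.2.2⟩
  | some u, none =>
    obtain ⟨hcC, hcX⟩ := hc hy
    have hu := (mem_image_some.mp hx).1
    exact ⟨hu, hcC, hxy.2 c hcX⟩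
  | none, some v =>
    obtain ⟨hcC, hcX⟩ := hc hx
    have hv := (mem_image_some.mp hy).1
    exact ⟨hcC, hv, hxy.2 c hcX⟩
  | none, none => exact hxy.elim

/-- The image of a configuration under the folding map is a configuration of
the folded structure. -/
lemma fold_config {A : AES E Λ} [Inhabited Λ] (hA : A.IsAES) {X : Set E}
    (hS : A.Similar X) {C : Set E} (hC : A.Config C) :
    (A.foldES X).Config (foldMap X '' C) := by
  refine ⟨?_, hC.1.image _, ?_, ?_⟩
  · -- subset of carrier
    rintro _ ⟨v, hv, rfl⟩
    by_cases h : v ∈ X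
    · rw [foldMap_mem h]; exact Or.inl rfl
    · rw [foldMap_not_mem h]; exact Or.inr ⟨v, h, rfl⟩
  · -- causal closure
    intro x hx y _ hle
    match y, x with
    | some b, some a =>
      obtain ⟨hbX, haX, hba⟩ := hle
      have haC := (mem_image_some.mp hx).1
      exact mem_image_some.mpr ⟨hC.2.1 a haC hba, hbX⟩
    | none, some a =>
      obtain ⟨haX, e', he'X, he'lt⟩ := hle
      have haC := (mem_image_some.mp hx).1
      exact mem_image_none.mpr ⟨e', hC.2.1 a haC he'lt.1, he'X⟩
    | some b, none =>
      obtain ⟨cc, hccC, hccX⟩ := mem_image_none.mp hx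
      have hbc : A.lt b cc := hle cc hccX
      have hbC : b ∈ C := hC.2.1 cc hccC hbc.1
      have hbX : b ∉ X := fun hbX => (hle b hbX).2 rfl
      exact mem_image_some.mpr ⟨hbC, hbX⟩
    | none, none => exact hx
  · -- acyclicity
    intro x hcyc
    obtain ⟨y, hedge⟩ := transGen_exists_head hcyc
    have hxmem : x ∈ foldMap X '' C := hedge.1
    by_cases hn : (none : Option E) ∈ foldMap X '' C
    · obtain ⟨c, hcC, hcX⟩ := mem_image_none.mp hn
      have := Relation.TransGen.lift (fun o : Option E => o.getD c)
        (edge_back (fun _ => ⟨hcC, hcX⟩)) _ _ hcyc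
      exact hC.2.2 _ this
    · match x with
      | none => exact hn hxmem
      | some u =>
        have huC := (mem_image_some.mp hxmem).1
        have := Relation.TransGen.lift (fun o : Option E => o.getD u)
          (edge_back (fun h => absurd h hn)) _ _ hcyc
        exact hC.2.2 _ this

/-- Adding an event with no outgoing asymmetric conflict preserves acyclicity. -/
lemma acyclic_extend {A : AES E Λ} {C : Set E} {e : E}
    (hacy : AcyclicOn A.ac C) (hout : ∀ v ∈ C ∪ {e}, ¬ A.ac e v) :
    AcyclicOn A.ac (C ∪ {e}) := by
  intro x hx
  have hnosrc : ∀ u v, RelRestrict A.ac (C ∪ {e}) u v → u ≠ e := by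
    rintro u v ⟨hu, hv, huv⟩ rfl
    exact hout v hv huv
  have hmem : ∀ u, u ∈ C ∪ {e} → u ≠ e → u ∈ C := by
    intro u hu hne
    rcases hu with h | h
    · exact h
    · exact absurd h hne
  have key : ∀ a b, TransGen (RelRestrict A.ac (C ∪ {e})) a b → b ≠ e →
      TransGen (RelRestrict A.ac C) a b := by
    intro a b h
    induction h with
    | single h' =>
      intro hbe
      exact TransGen.single ⟨hmem _ h'.1 (hnosrc _ _ h'), hmem _ h'.2.1 hbe, h'.2.2⟩
    | tail h1 h2 ih =>
      intro hce
      have hbne := hnosrc _ _ h2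
      exact (ih hbne).tail ⟨hmem _ h2.1 hbne, hmem _ h2.2.1 hce, h2.2.2⟩
  obtain ⟨y, hxy⟩ := transGen_exists_head hx
  exact hacy x (key x x hx (hnosrc _ _ hxy))

end AES

end Aux4
section Aux5

open Relation

variable {E : Type*} {Λ : Type*}

namespace AES

/-- Lifting an edge of asymmetric conflict in a configuration to a path in the
image configuration of the folded structure. -/
lemma edge_fwd {A : AES E Λ} (hA : A.IsAES) {X : Set E} (hS : A.Similar X)
    {C : Set E} (hC : A.Config C) {a b : E} (h : RelRestrict A.ac C a b) :
    Relation.ReflTransGen (RelRestrict (A.foldAc X) (foldMap X '' C))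
      (foldMap X a) (foldMap X b) := by
  obtain ⟨ha, hb, hab⟩ := h
  by_cases haX : a ∈ X <;> by_cases hbX : b ∈ X
  · -- both in X : equal by uniqueness
    have : a = b := config_unique_X hA hS hC ha haX hb hbX
    subst this
    exact ReflTransGen.refl
  · -- a ∈ X, b ∉ X
    rw [foldMap_mem haX, foldMap_not_mem hbX]
    by_cases hall : ∀ e ∈ X, A.ac e b
    · refine ReflTransGen.single ⟨mem_image_none.mpr ⟨a, ha, haX⟩,
        mem_image_some.mpr ⟨hb, hbX⟩, ?_⟩
      show b ∉ X ∧ ∀ e ∈ X, A.ac e b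
      exact ⟨hbX, hall⟩
    · push_neg at hall
      obtain ⟨e₀, he₀, hne₀⟩ := hall
      rcases ((hS a haX e₀ he₀).2.2 b hbX).1 hab with h1 | h2
      · exact absurd h1 hne₀
      · refine (hC.2.2 a ?_).elim
        exact TransGen.head ⟨ha, hb, hab⟩ (TransGen.single ⟨hb, ha, h2⟩)
  · -- a ∉ X, b ∈ X : descent
    rw [foldMap_not_mem haX, foldMap_mem hbX]
    exact (desc hA hS (fun u hu z hz => hC.2.1 u hu hz)
      (fun v hv hvX => mem_image_some.mpr ⟨hv, hvX⟩)
      (mem_image_none.mpr ⟨b, hb, hbX⟩) b hbX hb a ha haX hab).to_reflTransGen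
  · -- neither in X : single edge
    rw [foldMap_not_mem haX, foldMap_not_mem hbX]
    exact ReflTransGen.single ⟨mem_image_some.mpr ⟨ha, haX⟩,
      mem_image_some.mpr ⟨hb, hbX⟩, haX, hbX, hab⟩

/-- The folding map is a label-preserving order isomorphism between a
configuration and its image. -/
lemma fold_iso {A : AES E Λ} [Inhabited Λ] (hA : A.IsAES) {X : Set E}
    (hS : A.Similar X) {C : Set E} (hC : A.Config C) :
    IsPosetIso A.toES (A.foldES X) C (foldMap X '' C) (foldMap X) := by
  refine ⟨?_, rfl, ?_, ?_⟩
  · -- injectivity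
    intro a ha b hb hfab
    by_cases haX : a ∈ X <;> by_cases hbX : b ∈ X
    · exact config_unique_X hA hS hC ha haX hb hbX
    · rw [foldMap_mem haX, foldMap_not_mem hbX] at hfab; exact absurd hfab (by simp)
    · rw [foldMap_not_mem haX, foldMap_mem hbX] at hfab; exact absurd hfab (by simp)
    · rw [foldMap_not_mem haX, foldMap_not_mem hbX] at hfab; injection hfab
  · -- labels
    intro e _
    exact foldLab_foldMap hS e
  · -- order isomorphism
    have fwd : ∀ a b : E, Relation.ReflTransGen (RelRestrict A.ac C) a b →
        Relation.ReflTransGen (RelRestrict (A.foldAc X) (foldMap X '' C))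
          (foldMap X a) (foldMap X b) := by
      intro a b h
      induction h with
      | refl => exact ReflTransGen.refl
      | tail h1 h2 ih => exact ih.trans (edge_fwd hA hS hC h2)
    intro a ha b hb
    constructor
    · intro h
      exact fwd a b h
    · intro h
      by_cases hn : (none : Option E) ∈ foldMap X '' C
      · obtain ⟨c, hcC, hcX⟩ := mem_image_none.mp hn
        have hlift := Relation.ReflTransGen.lift (fun o : Option E => o.getD c)
          (edge_back (fun _ => ⟨hcC, hcX⟩)) _ _ h
        have hga : (foldMap X a).getD c = a := by
          by_cases haX : a ∈ X
          · rw [foldMap_mem haX]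
            exact config_unique_X hA hS hC hcC hcX ha haX
          · rw [foldMap_not_mem haX]; rfl
        have hgb : (foldMap X b).getD c = b := by
          by_cases hbX : b ∈ X
          · rw [foldMap_mem hbX]
            exact config_unique_X hA hS hC hcC hcX hb hbX
          · rw [foldMap_not_mem hbX]; rfl
        have hlift' : Relation.ReflTransGen (RelRestrict A.ac C)
            ((foldMap X a).getD c) ((foldMap X b).getD c) := hlift
        rw [hga, hgb] at hlift'
        exact hlift'
      · have haX : a ∉ X := fun haX => hn ⟨a, ha, foldMap_mem haX⟩
        have hbX : b ∉ X := fun hbX => hn ⟨b, hb, foldMap_mem hbX⟩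
        have hlift := Relation.ReflTransGen.lift (fun o : Option E => o.getD a)
          (edge_back (A := A) (fun hmem => absurd hmem hn)) _ _ h
        have hlift' : Relation.ReflTransGen (RelRestrict A.ac C)
            ((foldMap X a).getD a) ((foldMap X b).getD a) := hlift
        rw [foldMap_not_mem haX, foldMap_not_mem hbX] at hlift'
        exact hlift'

/-- A configuration of `A` is a configuration of `A.toES`. -/
lemma toES_config {A : AES E Λ} {C : Set E} (h : A.Config C) : A.toES.Config C := by
  refine ⟨Set.subset_univ C, h.1, fun x hx y _ hle => h.2.1 x hx hle, h.2.2⟩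

lemma config_of_toES {A : AES E Λ} {C : Set E} (h : A.toES.Config C) : A.Config C := by
  refine ⟨h.2.1, fun x hx z hz => h.2.2.1 x hx z (Set.mem_univ z) hz, h.2.2.2⟩

end AES

end Aux5
section Aux6

open Relation

variable {E : Type*} {Λ : Type*}

namespace AES

/-- Backward simulation, case of an original event `b ∉ X`: the configuration
can be extended by `b` itself. -/
lemma backward_some {A : AES E Λ} [Inhabited Λ] (hA : A.IsAES) {X : Set E}
    (hX : A.Combinable X) {C : Set E} (hC : A.Config C) {b : E}
    (hbX : b ∉ X) (hbC : b ∉ C)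
    (hext : (A.foldES X).Extends (foldMap X '' C) (foldMap X '' C ∪ {some b}))
    (hcfg : (A.foldES X).Config (foldMap X '' C ∪ {some b})) :
    A.Config (C ∪ {b}) := by
  have hsb : some b ∉ foldMap X '' C := fun h => hbC (mem_image_some.mp h).1
  -- no asymmetric conflict from b to events of C outside X
  have hnotC2 : ∀ v ∈ C, v ∉ X → ¬ A.ac b v := by
    intro v hv hvX hacv
    exact hext.2 (some v) (mem_image_some.mpr ⟨hv, hvX⟩) (some b) (Or.inr rfl) hsb
      ⟨hbX, hvX, hacv⟩
  -- no asymmetric conflict from b to events of C inside X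
  have hacX : ∀ v ∈ C, v ∈ X → ¬ A.ac b v := by
    intro v hv hvX hacv
    obtain ⟨v', hv'le, hmu⟩ := hA.acMu_exists hacv
    have hne : ¬ A.foldAc X (some b) none :=
      hext.2 none (mem_image_none.mpr ⟨v, hv, hvX⟩) (some b) (Or.inr rfl) hsb
    have hex0 : ∃ e₀ ∈ X, ¬ A.ac b e₀ := by
      by_contra hco
      push_neg at hco
      exact hne ⟨hbX, hco⟩
    obtain ⟨e₀, he₀X, he₀⟩ := hex0
    by_cases hv'X : v' ∈ X
    · exact he₀ (((hX.1 v' hv'X e₀ he₀X).2.2 b hbX).2 hmu)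
    · exact hnotC2 v' (hC.2.1 v hv hv'le) hv'X hmu.1
  refine ⟨hC.1.union (Set.finite_singleton b), ?_, ?_⟩
  · -- causal closure
    intro x hx z hz
    rcases hx with hx | hx
    · exact Or.inl (hC.2.1 x hx hz)
    · rw [show x = b from hx] at hz
      by_cases hzb : z = b
      · exact Or.inr hzb
      · by_cases hzX : z ∈ X
        · -- a cause of b inside X : must be the unique X-event of C
          have hnone : (none : Option E) ∈ foldMap X '' C ∪ {some b} :=
            hcfg.2.2.1 (some b) (Or.inr rfl) none (Or.inl rfl)
              (show A.foldLe X none (some b) from ⟨hbX, z, hzX, hz, hzb⟩)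
          have hnone' : (none : Option E) ∈ foldMap X '' C := by
            rcases hnone with h | h
            · exact h
            · exact absurd h (by simp)
          obtain ⟨c, hcC, hcX⟩ := mem_image_none.mp hnone'
          by_cases hzc : z = c
          · exact Or.inl (hzc ▸ hcC)
          · exfalso
            have haczc := mutual_ac hA hX.1 hzX hcX hzc
            have haccz := mutual_ac hA hX.1 hcX hzX (Ne.symm hzc)
            have hcyc : ¬ AcyclicOn A.ac (A.causes b ∪ A.causes c) := by
              intro hacy
              exact hacy z (TransGen.head ⟨Or.inl hz, Or.inr (hA.le_refl c), haczc⟩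
                (TransGen.single ⟨Or.inr (hA.le_refl c), Or.inl hz, haccz⟩))
            have habc : A.ac b c := hA.cyclic_ac b c hcyc
            obtain ⟨c', hc'le, hmu⟩ := hA.acMu_exists habc
            by_cases hc'X : c' ∈ X
            · have hbz : A.ac b z := ((hX.1 c' hc'X z hzX).2.2 b hbX).2 hmu
              exact hA.not_ac_self b (hA.ac_heredity b z b hbz ⟨hz, hzb⟩)
            · exact hnotC2 c' (hC.2.1 c hcC hc'le) hc'X hmu.1
        · -- a cause of b outside X
          have hmem : some z ∈ foldMap X '' C ∪ {some b} :=
            hcfg.2.2.1 (some b) (Or.inr rfl) (some z) (Or.inr ⟨z, hzX, rfl⟩)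
              (show A.foldLe X (some z) (some b) from ⟨hzX, hbX, hz⟩)
          rcases hmem with h | h
          · exact Or.inl (mem_image_some.mp h).1
          · exact absurd (show z = b by injection h) hzb
  · -- acyclicity
    apply acyclic_extend hC.2.2
    intro v hv hacv
    rcases hv with hvC | hvb
    · by_cases hvX : v ∈ X
      · exact hacX v hvC hvX hacv
      · exact hnotC2 v hvC hvX hacv
    · rw [show v = b from hvb] at hacv
      exact hA.not_ac_self b hacv

/-- Backward simulation, case of the fresh event: combinability provides an
event of `X` extending the configuration. -/
lemma backward_none {A : AES E Λ} [Inhabited Λ] (hA : A.IsAES) {X : Set E}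
    (hX : A.Combinable X) {C : Set E} (hC : A.Config C)
    (hnC : (none : Option E) ∉ foldMap X '' C)
    (hext : (A.foldES X).Extends (foldMap X '' C) (foldMap X '' C ∪ {none}))
    (hcfg : (A.foldES X).Config (foldMap X '' C ∪ {none})) :
    ∃ e ∈ X, A.Config (C ∪ {e}) := by
  have hCX : ∀ v ∈ C, v ∉ X := fun v hv hvX => hnC (mem_image_none.mpr ⟨v, hv, hvX⟩)
  have hSC : A.strictCauses X ⊆ C := by
    intro s hs
    have hsX : s ∉ X := fun hsX => (hs s hsX).2 rfl
    have hmem : some s ∈ foldMap X '' C ∪ {none} :=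
      hcfg.2.2.1 none (Or.inr rfl) (some s) (Or.inr ⟨s, hsX, rfl⟩)
        (show A.foldLe X (some s) none from hs)
    rcases hmem with h | h
    · exact (mem_image_some.mp h).1
    · exact absurd h (by simp)
  have hstar : ∀ v ∈ C, ∃ e₀ ∈ X, ¬ A.ac e₀ v := by
    intro v hv
    have hvX := hCX v hv
    have hne : ¬ A.foldAc X none (some v) :=
      hext.2 (some v) (mem_image_some.mpr ⟨hv, hvX⟩) none (Or.inr rfl) hnC
    by_contra hco
    push_neg at hco
    exact hne ⟨hvX, hco⟩
  have hYcons : A.ConsistentSet (A.weakPred X ∩ C) := by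
    intro a ha a' ha' hconf
    refine setConflict_cycle hconf C (fun u hu z hz => hC.2.1 u hu hz) ?_ hC.2.2
    intro x hx
    rcases hx with h | h
    · exact (show x = a from h) ▸ ha.2
    · exact (show x = a' from h) ▸ ha'.2
  obtain ⟨e, heX, hnot, h, hh, hsubS⟩ := hX.2 (A.weakPred X ∩ C) Set.inter_subset_left hYcons
  obtain ⟨Ch, hCh, heCh, rfl⟩ := hh
  refine ⟨e, heX, hC.1.union (Set.finite_singleton e), ?_, ?_⟩
  · -- causal closure
    intro x hx z hz
    rcases hx with hx | hx
    · exact Or.inl (hC.2.1 x hx hz)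
    · rw [show x = e from hx] at hz
      by_cases hze : z = e
      · exact Or.inr hze
      · have hzCh : z ∈ Ch := hCh.2.1 e heCh hz
        have hzh : z ∈ A.history Ch e :=
          ⟨hzCh, ReflTransGen.single ⟨hzCh, heCh, hA.lt_ac z e ⟨hz, hze⟩⟩⟩
        have hz2 := hsubS ⟨hzh, hze⟩
        rcases hz2 with hzS | hzY
        · exact Or.inl (hSC hzS)
        · simp only [AES.causesSet, Set.mem_iUnion] at hzY
          obtain ⟨y, hyY, hzy⟩ := hzY
          exact Or.inl (hC.2.1 y hyY.2 hzy)
  · -- acyclicity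
    apply acyclic_extend hC.2.2
    intro v hv hacev
    rcases hv with hvC | hve
    · have hvX := hCX v hvC
      by_cases hvW : v ∈ A.weakPred X
      · exact hnot v ⟨hvW, hvC⟩ hacev
      · by_cases hvS : v ∈ A.strictCauses X
        · exact hA.not_ac_self e (hA.ac_heredity e v e hacev (hvS e heX))
        · obtain ⟨e₀, he₀X, hne₀⟩ := hstar v hvC
          have hnoout : ∀ a ∈ X, ¬ A.ac v a := by
            intro a haX hva
            refine hvW ⟨⟨a, haX, e₀, he₀X, hva, hne₀⟩, ?_⟩
            intro hmem
            rcases hmem with hm | hm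
            · exact hvS hm
            · exact hvX hm
          rcases ((hX.1 e heX e₀ he₀X).2.2 v hvX).1 hacev with h1 | h2
          · exact hne₀ h1
          · exact hnoout e heX h2
    · rw [show v = e from hve] at hacev
      exact hA.not_ac_self e hacev

end AES

end Aux6
open AES in
/-- `R = {(C₁, f|_{C₁}, f(C₁)) | C₁ ∈ Conf(A)}` is a history
preserving bisimulation between `A` and its folding `A/X`. -/
theorem aes_folding_hp_bisimulation
    {E Λ : Type*} [Inhabited Λ] (A : AES E Λ) (hA : A.IsAES)
    (X : Set E) (hX : A.Combinable X) :
    IsHpBisim A.toES (A.foldES X)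
      {t | ∃ C₁ : Set E, A.Config C₁ ∧ t = (C₁, foldMap X, foldMap X '' C₁)} := by
  classical
  have hempty : A.Config ∅ := by
    refine ⟨Set.finite_empty, fun x hx => hx.elim, fun x hcyc => ?_⟩
    obtain ⟨y, hxy⟩ := transGen_exists_head hcyc
    exact hxy.1
  refine ⟨?_, ⟨foldMap X, ∅, hempty, by simp⟩, ?_⟩
  · -- all triples consist of configurations related by an isomorphism
    rintro t ⟨C, hC, rfl⟩
    exact ⟨toES_config hC, fold_config hA hX.1 hC, fold_iso hA hX.1 hC⟩
  · -- the simulation conditions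
    intro C₁ g C₂ hmem
    obtain ⟨C, hC, heq⟩ := hmem
    injection heq with h1 h23
    injection h23 with h2 h3
    subst h1; subst h2; subst h3
    constructor
    · -- forward simulation
      intro e₁ _ _ hcfg
      refine ⟨foldMap X e₁, ?_, foldLab_foldMap hX.1 e₁, foldMap X, fun x _ => rfl,
        ⟨C₁ ∪ {e₁}, config_of_toES hcfg, ?_⟩⟩
      · by_cases h : e₁ ∈ X
        · rw [foldMap_mem h]; exact Or.inl rfl
        · rw [foldMap_not_mem h]; exact Or.inr ⟨e₁, h, rfl⟩
      · simp [Set.image_union, Set.image_insert_eq]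
    · -- backward simulation
      intro e₂ hcar hext hcfg
      rcases hcar with h0 | ⟨b, hbX, rfl⟩
      · subst h0
        by_cases hnC : (none : Option E) ∈ foldMap X '' C₁
        · obtain ⟨c, hcC, hcX⟩ := mem_image_none.mp hnC
          refine ⟨c, Set.mem_univ c, (foldLab_none hX.1 hcX).symm, foldMap X,
            fun x _ => rfl, ⟨C₁, hC, ?_⟩⟩
          have h1 : C₁ ∪ {c} = C₁ := Set.union_eq_left.mpr (Set.singleton_subset_iff.mpr hcC)
          have h2 : foldMap X '' C₁ ∪ {none} = foldMap X '' C₁ :=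
            Set.union_eq_left.mpr (Set.singleton_subset_iff.mpr hnC)
          rw [h1, h2]
        · obtain ⟨e, heX, hcfg'⟩ := backward_none hA hX hC hnC hext hcfg
          refine ⟨e, Set.mem_univ e, (foldLab_none hX.1 heX).symm, foldMap X,
            fun x _ => rfl, ⟨C₁ ∪ {e}, hcfg', ?_⟩⟩
          simp [Set.image_union, Set.image_insert_eq, foldMap_mem heX]
      · by_cases hbC : b ∈ C₁
        · refine ⟨b, Set.mem_univ b, rfl, foldMap X, fun x _ => rfl, ⟨C₁, hC, ?_⟩⟩
          have h1 : C₁ ∪ {b} = C₁ := Set.union_eq_left.mpr (Set.singleton_subset_iff.mpr hbC)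
          have h2 : foldMap X '' C₁ ∪ {some b} = foldMap X '' C₁ :=
            Set.union_eq_left.mpr (Set.singleton_subset_iff.mpr (mem_image_some.mpr ⟨hbC, hbX⟩))
          rw [h1, h2]
        · refine ⟨b, Set.mem_univ b, rfl, foldMap X, fun x _ => rfl,
            ⟨C₁ ∪ {b}, backward_some hA hX hC hbX hbC hext hcfg, ?_⟩⟩
          simp [Set.image_union, Set.image_insert_eq, foldMap_not_mem hbX]
end
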